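/- For every even Δ ≥ 2, there exists a planar graph G with maximum degree Δ such that χ₂(G) ≥ (3Δ/2) + 1. -/

import Mathlib

open SimpleGraph

/-- The square of a graph `G`: two distinct vertices are adjacent iff they are at
distance at most 2 in `G`. -/
def SimpleGraph.square {V : Type*} (G : SimpleGraph V) : SimpleGraph V where
  Adj u v := u ≠ v ∧ (G.Adj u v ∨ ∃ w, G.Adj u w ∧ G.Adj w v)
  symm := ⟨fun u v ⟨h1, h2⟩ => ⟨h1.symm, h2.elim (fun h => Or.inl h.symm)
    (fun ⟨w, h3, h4⟩ => Or.inr ⟨w, h4.symm, h3.symm⟩)⟩⟩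
  loopless := ⟨fun _ h => h.1 rfl⟩

/-- The 2-chromatic number of a graph: the chromatic number of its square. -/
noncomputable def chi2 {V : Type*} (G : SimpleGraph V) : ℕ∞ :=
  G.square.chromaticNumber

/-- The degree of a vertex, as a cardinality (instance-free). -/
noncomputable def degN {V : Type*} (G : SimpleGraph V) (v : V) : ℕ :=
  Nat.card {u // G.Adj v u}

/-- `G` has maximum degree `Δ`. -/
def maxDegIs {V : Type*} (G : SimpleGraph V) (Δ : ℕ) : Prop :=
  (∀ v, degN G v ≤ Δ) ∧ ∃ v, degN G v = Δ

/-- A graph is planar if it has a drawing in the plane: an injective placement of the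
vertices and, for each edge, a simple arc joining the endpoints, such that arcs avoid
all vertex points and the interiors of arcs of distinct edges are disjoint. -/
def IsPlanar {V : Type*} (G : SimpleGraph V) : Prop :=
  ∃ (pos : V → ℝ × ℝ) (arc : V → V → ℝ → ℝ × ℝ),
    Function.Injective pos ∧
    (∀ u v, G.Adj u v →
      Continuous (arc u v) ∧ arc u v 0 = pos u ∧ arc u v 1 = pos v ∧
      Set.InjOn (arc u v) (Set.Icc 0 1) ∧
      ∀ w, pos w ∉ arc u v '' Set.Ioo 0 1) ∧
    ∀ u v x y, G.Adj u v → G.Adj x y → s(u, v) ≠ s(x, y) →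
      Disjoint (arc u v '' Set.Ioo 0 1) (arc x y '' Set.Ioo 0 1)

/-! ### Auxiliary development: Wegner's construction -/

namespace Weg

open Set Sum

/-! #### Segments in the plane -/

def seg (p q : ℝ × ℝ) (t : ℝ) : ℝ × ℝ := (p.1 + t * (q.1 - p.1), p.2 + t * (q.2 - p.2))

def I (p q : ℝ × ℝ) : Set (ℝ × ℝ) := seg p q '' Ioo 0 1

lemma seg_cont (p q : ℝ × ℝ) : Continuous (seg p q) := by
  unfold seg; fun_prop

@[simp] lemma seg_zero (p q : ℝ × ℝ) : seg p q 0 = p := by simp [seg]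
@[simp] lemma seg_one (p q : ℝ × ℝ) : seg p q 1 = q := by simp [seg]

lemma seg_injOn {p q : ℝ × ℝ} (h : p ≠ q) : InjOn (seg p q) (Icc 0 1) := by
  intro s _ t _ hst
  simp only [seg, Prod.mk.injEq] at hst
  obtain ⟨h1, h2⟩ := hst
  by_cases hx : q.1 - p.1 = 0
  · have hy : q.2 - p.2 ≠ 0 := by
      intro hy; apply h; ext
      · linarith [sub_eq_zero.mp hx]
      · linarith [sub_eq_zero.mp hy]
    have : s * (q.2 - p.2) = t * (q.2 - p.2) := by linarith
    exact mul_right_cancel₀ hy this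
  · have : s * (q.1 - p.1) = t * (q.1 - p.1) := by linarith
    exact mul_right_cancel₀ hx this

lemma I_comm (p q : ℝ × ℝ) : I p q = I q p := by
  have key : ∀ p q : ℝ × ℝ, I p q ⊆ I q p := by
    rintro p q r ⟨t, ⟨ht0, ht1⟩, rfl⟩
    exact ⟨1 - t, ⟨by linarith, by linarith⟩, by simp [seg]; constructor <;> ring⟩
  exact subset_antisymm (key p q) (key q p)

lemma disjA (α β c : ℝ) {p1 q1 p2 q2 : ℝ × ℝ}
    (h1 : α * p1.1 + β * p1.2 ≤ c) (h2 : α * q1.1 + β * q1.2 ≤ c)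
    (h3 : c ≤ α * p2.1 + β * p2.2) (h4 : c ≤ α * q2.1 + β * q2.2)
    (h5 : α * p1.1 + β * p1.2 < c ∨ α * q1.1 + β * q1.2 < c ∨
          c < α * p2.1 + β * p2.2 ∨ c < α * q2.1 + β * q2.2) :
    Disjoint (I p1 q1) (I p2 q2) := by
  rw [Set.disjoint_left]
  rintro r ⟨t, ⟨ht0, ht1⟩, rfl⟩ ⟨s, ⟨hs0, hs1⟩, hr⟩
  have e1 : α * (seg p1 q1 t).1 + β * (seg p1 q1 t).2
      = (1 - t) * (α * p1.1 + β * p1.2) + t * (α * q1.1 + β * q1.2) := by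
    simp [seg]; ring
  have e2 : α * (seg p2 q2 s).1 + β * (seg p2 q2 s).2
      = (1 - s) * (α * p2.1 + β * p2.2) + s * (α * q2.1 + β * q2.2) := by
    simp [seg]; ring
  have := congrArg (fun r : ℝ × ℝ => α * r.1 + β * r.2) hr
  rw [e2] at this
  rw [e1] at this
  rcases h5 with h | h | h | h <;> nlinarith

lemma notMemA (α β c : ℝ) {p q w : ℝ × ℝ}
    (h1 : α * p.1 + β * p.2 ≤ c) (h2 : α * q.1 + β * q.2 ≤ c)
    (h3 : c ≤ α * w.1 + β * w.2)
    (h5 : α * p.1 + β * p.2 < c ∨ α * q.1 + β * q.2 < c ∨ c < α * w.1 + β * w.2) :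
    w ∉ I p q := by
  rintro ⟨t, ⟨ht0, ht1⟩, hr⟩
  have e1 : α * (seg p q t).1 + β * (seg p q t).2
      = (1 - t) * (α * p.1 + β * p.2) + t * (α * q.1 + β * q.2) := by
    simp [seg]; ring
  have := congrArg (fun r : ℝ × ℝ => α * r.1 + β * r.2) hr
  rw [e1] at this
  rcases h5 with h | h | h <;> nlinarith

lemma disjB {p q r : ℝ × ℝ}
    (h : (q.1 - p.1) * (r.2 - p.2) - (q.2 - p.2) * (r.1 - p.1) ≠ 0) :
    Disjoint (I p q) (I p r) := by
  rw [Set.disjoint_left]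
  rintro x ⟨t, ⟨ht0, ht1⟩, rfl⟩ ⟨s, ⟨hs0, hs1⟩, hr⟩
  simp only [seg, Prod.mk.injEq] at hr
  obtain ⟨e1, e2⟩ := hr
  have e1' : s * (r.1 - p.1) = t * (q.1 - p.1) := by linarith
  have e2' : s * (r.2 - p.2) = t * (q.2 - p.2) := by linarith
  have : t * ((q.1 - p.1) * (r.2 - p.2) - (q.2 - p.2) * (r.1 - p.1)) = 0 := by
    linear_combination (-(r.2 - p.2)) * e1' + (r.1 - p.1) * e2'
  have ht : t = 0 := by
    rcases mul_eq_zero.mp this with h' | h'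
    · exact h'
    · exact absurd h' h
  linarith

/-! #### The vertex positions -/

noncomputable def Px : ℝ × ℝ := (-1, 0)
noncomputable def Py : ℝ × ℝ := (1, 0)
noncomputable def Pz : ℝ × ℝ := (0, 2)
noncomputable def PA (r : ℝ) : ℝ × ℝ := (0, -(1 + r))
noncomputable def PB (r : ℝ) : ℝ × ℝ := (2 * r + 5/2, r + 2)
noncomputable def PC (r : ℝ) : ℝ × ℝ := (-(2 * r + 5/2), r + 2)

lemma GA3 (r : ℝ) (hr : 0 ≤ r) {p q : ℝ × ℝ} (hp : 0 ≤ p.2) (hq : 0 ≤ q.2) :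
    Disjoint (I Px (PA r)) (I p q) := by
  refine disjA 0 1 0 ?_ ?_ ?_ ?_ (Or.inr (Or.inl ?_)) <;> simp [Px, PA] <;> linarith

lemma GA4 (r : ℝ) (hr : 0 ≤ r) {p q : ℝ × ℝ} (hp : 0 ≤ p.2) (hq : 0 ≤ q.2) :
    Disjoint (I (PA r) Py) (I p q) := by
  refine disjA 0 1 0 ?_ ?_ ?_ ?_ (Or.inl ?_) <;> simp [Py, PA] <;> linarith

lemma GB5 (r : ℝ) (hr : 0 ≤ r) {p q : ℝ × ℝ}
    (hp : 2 * p.1 + p.2 ≤ 2) (hq : 2 * q.1 + q.2 ≤ 2) :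
    Disjoint (I p q) (I Py (PB r)) := by
  refine disjA 2 1 2 ?_ ?_ ?_ ?_ (Or.inr (Or.inr (Or.inr ?_))) <;>
    simp [Py, PB] <;> linarith

lemma GB6 (r : ℝ) (hr : 0 ≤ r) {p q : ℝ × ℝ}
    (hp : 2 * p.1 + p.2 ≤ 2) (hq : 2 * q.1 + q.2 ≤ 2) :
    Disjoint (I p q) (I (PB r) Pz) := by
  refine disjA 2 1 2 ?_ ?_ ?_ ?_ (Or.inr (Or.inr (Or.inl ?_))) <;>
    simp [Pz, PB] <;> linarith

lemma GC7 (r : ℝ) (hr : 0 ≤ r) {p q : ℝ × ℝ}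
    (hp : -2 * p.1 + p.2 ≤ 2) (hq : -2 * q.1 + q.2 ≤ 2) :
    Disjoint (I p q) (I Px (PC r)) := by
  refine disjA (-2) 1 2 ?_ ?_ ?_ ?_ (Or.inr (Or.inr (Or.inr ?_))) <;>
    simp [Px, PC] <;> linarith

lemma GC8 (r : ℝ) (hr : 0 ≤ r) {p q : ℝ × ℝ}
    (hp : -2 * p.1 + p.2 ≤ 2) (hq : -2 * q.1 + q.2 ≤ 2) :
    Disjoint (I p q) (I (PC r) Pz) := by
  refine disjA (-2) 1 2 ?_ ?_ ?_ ?_ (Or.inr (Or.inr (Or.inl ?_))) <;>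
    simp [Pz, PC] <;> linarith

lemma Yx : (0:ℝ) ≤ Px.2 := by norm_num [Px]
lemma Yy : (0:ℝ) ≤ Py.2 := by norm_num [Py]
lemma Yz : (0:ℝ) ≤ Pz.2 := by norm_num [Pz]
lemma YB (r : ℝ) (hr : 0 ≤ r) : (0:ℝ) ≤ (PB r).2 := by simp [PB]; linarith
lemma YC (r : ℝ) (hr : 0 ≤ r) : (0:ℝ) ≤ (PC r).2 := by simp [PC]; linarith
lemma F3x : 2 * Px.1 + Px.2 ≤ 2 := by norm_num [Px]
lemma F3y : 2 * Py.1 + Py.2 ≤ 2 := by norm_num [Py]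
lemma F3z : 2 * Pz.1 + Pz.2 ≤ 2 := by norm_num [Pz]
lemma F3A (r : ℝ) (hr : 0 ≤ r) : 2 * (PA r).1 + (PA r).2 ≤ 2 := by simp [PA]; linarith
lemma F3C (r : ℝ) (hr : 0 ≤ r) : 2 * (PC r).1 + (PC r).2 ≤ 2 := by simp [PC]; linarith
lemma F4x : -2 * Px.1 + Px.2 ≤ 2 := by norm_num [Px]
lemma F4y : -2 * Py.1 + Py.2 ≤ 2 := by norm_num [Py]
lemma F4z : -2 * Pz.1 + Pz.2 ≤ 2 := by norm_num [Pz]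
lemma F4A (r : ℝ) (hr : 0 ≤ r) : -2 * (PA r).1 + (PA r).2 ≤ 2 := by simp [PA]; linarith
lemma F4B (r : ℝ) (hr : 0 ≤ r) : -2 * (PB r).1 + (PB r).2 ≤ 2 := by simp [PB]; linarith

lemma D12 : Disjoint (I Px Py) (I Py Pz) := by
  rw [I_comm Px Py]
  exact disjB (by norm_num [Px, Py, Pz])

lemma D33 (r s : ℝ) (h : r ≠ s) : Disjoint (I Px (PA r)) (I Px (PA s)) := by
  refine disjB ?_
  simp only [Px, PA]
  intro hc
  apply h
  nlinarith [hc]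

lemma D34 (r s : ℝ) : Disjoint (I Px (PA r)) (I (PA s) Py) := by
  refine disjA 1 0 0 ?_ ?_ ?_ ?_ (Or.inl ?_) <;> simp [Px, Py, PA] <;> norm_num

lemma D44 (r s : ℝ) (h : r ≠ s) : Disjoint (I (PA r) Py) (I (PA s) Py) := by
  rw [I_comm (PA r) Py, I_comm (PA s) Py]
  refine disjB ?_
  simp only [Py, PA]
  intro hc
  apply h
  nlinarith [hc]

lemma D55 (r s : ℝ) (h : r ≠ s) : Disjoint (I Py (PB r)) (I Py (PB s)) := by
  refine disjB ?_
  simp only [Py, PB]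
  intro hc
  apply h
  nlinarith [hc]

lemma D66 (r s : ℝ) (h : r ≠ s) : Disjoint (I (PB r) Pz) (I (PB s) Pz) := by
  rw [I_comm (PB r) Pz, I_comm (PB s) Pz]
  refine disjB ?_
  simp only [Pz, PB]
  intro hc
  apply h
  nlinarith [hc]

lemma D56 (r s : ℝ) (hr : 0 ≤ r) (hs : 0 ≤ s) :
    Disjoint (I Py (PB r)) (I (PB s) Pz) := by
  rcases le_or_gt r s with hle | hlt
  · refine (disjA s (-(2*s+5/2)) (-(4*s+5)) ?_ ?_ ?_ ?_ (Or.inr (Or.inr (Or.inl ?_)))).symm <;>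
      simp [Py, Pz, PB] <;> nlinarith
  · refine disjA (-(r+2)) (2*r+3/2) (-(r+2)) ?_ ?_ ?_ ?_ (Or.inr (Or.inr (Or.inl ?_))) <;>
      simp [Py, Pz, PB] <;> nlinarith

lemma D77 (r s : ℝ) (h : r ≠ s) : Disjoint (I Px (PC r)) (I Px (PC s)) := by
  refine disjB ?_
  simp only [Px, PC]
  intro hc
  apply h
  nlinarith [hc]

lemma D88 (r s : ℝ) (h : r ≠ s) : Disjoint (I (PC r) Pz) (I (PC s) Pz) := by
  rw [I_comm (PC r) Pz, I_comm (PC s) Pz]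
  refine disjB ?_
  simp only [Pz, PC]
  intro hc
  apply h
  nlinarith [hc]

lemma D78 (r s : ℝ) (hr : 0 ≤ r) (hs : 0 ≤ s) :
    Disjoint (I Px (PC r)) (I (PC s) Pz) := by
  rcases le_or_gt r s with hle | hlt
  · refine (disjA (-s) (-(2*s+5/2)) (-(4*s+5)) ?_ ?_ ?_ ?_ (Or.inr (Or.inr (Or.inl ?_)))).symm <;>
      simp [Px, Pz, PC] <;> nlinarith
  · refine disjA (r+2) (2*r+3/2) (-(r+2)) ?_ ?_ ?_ ?_ (Or.inr (Or.inr (Or.inl ?_))) <;>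
      simp [Px, Pz, PC] <;> nlinarith

lemma nm1x : Px ∉ I Px Py := by
  refine notMemA (-1) 0 1 ?_ ?_ ?_ (Or.inr (Or.inl ?_)) <;> simp [Px, Py] <;> norm_num
lemma nm1y : Py ∉ I Px Py := by
  refine notMemA 1 0 1 ?_ ?_ ?_ (Or.inl ?_) <;> simp [Px, Py] <;> norm_num
lemma nm1z : Pz ∉ I Px Py := by
  refine notMemA 0 1 0 ?_ ?_ ?_ (Or.inr (Or.inr ?_)) <;> simp [Px, Py, Pz]
lemma nm1A (r : ℝ) (hr : 0 ≤ r) : PA r ∉ I Px Py := by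
  refine notMemA 0 (-1) 0 ?_ ?_ ?_ (Or.inr (Or.inr ?_)) <;> simp [Px, Py, PA] <;> linarith
lemma nm1B (r : ℝ) (hr : 0 ≤ r) : PB r ∉ I Px Py := by
  refine notMemA 0 1 0 ?_ ?_ ?_ (Or.inr (Or.inr ?_)) <;> simp [Px, Py, PB] <;> linarith
lemma nm1C (r : ℝ) (hr : 0 ≤ r) : PC r ∉ I Px Py := by
  refine notMemA 0 1 0 ?_ ?_ ?_ (Or.inr (Or.inr ?_)) <;> simp [Px, Py, PC] <;> linarith

lemma nm2x : Px ∉ I Py Pz := by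
  refine notMemA (-2) (-1) (-2) ?_ ?_ ?_ (Or.inr (Or.inr ?_)) <;> simp [Px, Py, Pz] <;> norm_num
lemma nm2y : Py ∉ I Py Pz := by
  refine notMemA 2 (-1) 2 ?_ ?_ ?_ (Or.inr (Or.inl ?_)) <;> simp [Py, Pz] <;> norm_num
lemma nm2z : Pz ∉ I Py Pz := by
  refine notMemA (-2) 1 2 ?_ ?_ ?_ (Or.inl ?_) <;> simp [Py, Pz] <;> norm_num
lemma nm2A (r : ℝ) (hr : 0 ≤ r) : PA r ∉ I Py Pz := by
  refine notMemA (-2) (-1) (-2) ?_ ?_ ?_ (Or.inr (Or.inr ?_)) <;> simp [Py, Pz, PA] <;> linarith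
lemma nm2B (r : ℝ) (hr : 0 ≤ r) : PB r ∉ I Py Pz := by
  refine notMemA 2 1 2 ?_ ?_ ?_ (Or.inr (Or.inr ?_)) <;> simp [Py, Pz, PB] <;> linarith
lemma nm2C (r : ℝ) (hr : 0 ≤ r) : PC r ∉ I Py Pz := by
  refine notMemA (-2) (-1) (-2) ?_ ?_ ?_ (Or.inr (Or.inr ?_)) <;> simp [Py, Pz, PC] <;> linarith

lemma nm3x (r : ℝ) (hr : 0 ≤ r) : Px ∉ I Px (PA r) := by
  refine notMemA (-1) 0 1 ?_ ?_ ?_ (Or.inr (Or.inl ?_)) <;> simp [Px, PA] <;> norm_num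
lemma nm3gen (r : ℝ) (hr : 0 ≤ r) {w : ℝ × ℝ} (hw : 0 ≤ w.2) : w ∉ I Px (PA r) := by
  refine notMemA 0 1 0 ?_ ?_ ?_ (Or.inr (Or.inl ?_)) <;> simp [Px, PA] <;> linarith
lemma nm3A (r s : ℝ) : PA s ∉ I Px (PA r) := by
  refine notMemA 1 0 0 ?_ ?_ ?_ (Or.inl ?_) <;> simp [Px, PA] <;> norm_num

lemma nm4y (r : ℝ) (hr : 0 ≤ r) : Py ∉ I (PA r) Py := by
  refine notMemA 1 0 1 ?_ ?_ ?_ (Or.inl ?_) <;> simp [Py, PA] <;> norm_num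
lemma nm4gen (r : ℝ) (hr : 0 ≤ r) {w : ℝ × ℝ} (hw : 0 ≤ w.2) : w ∉ I (PA r) Py := by
  refine notMemA 0 1 0 ?_ ?_ ?_ (Or.inl ?_) <;> simp [Py, PA] <;> linarith
lemma nm4A (r s : ℝ) : PA s ∉ I (PA r) Py := by
  refine notMemA (-1) 0 0 ?_ ?_ ?_ (Or.inr (Or.inl ?_)) <;> simp [Py, PA] <;> norm_num

lemma nm5gen (r : ℝ) (hr : 0 ≤ r) {w : ℝ × ℝ} (hw : 2 * w.1 + w.2 ≤ 2) : w ∉ I Py (PB r) := by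
  refine notMemA (-2) (-1) (-2) ?_ ?_ ?_ (Or.inr (Or.inl ?_)) <;> simp [Py, PB] <;> linarith
lemma nm5B (r s : ℝ) (hr : 0 ≤ r) (hs : 0 ≤ s) : PB s ∉ I Py (PB r) := by
  rcases le_or_gt r s with h | h
  · refine notMemA 2 1 (5*r+7) ?_ ?_ ?_ (Or.inl ?_) <;> simp [Py, PB] <;> linarith
  · refine notMemA (-(r+2)) (2*r+3/2) (-(r+2)) ?_ ?_ ?_ (Or.inr (Or.inr ?_)) <;>
      simp [Py, PB] <;> nlinarith

lemma nm6gen (r : ℝ) (hr : 0 ≤ r) {w : ℝ × ℝ} (hw : 2 * w.1 + w.2 ≤ 2) : w ∉ I (PB r) Pz := by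
  refine notMemA (-2) (-1) (-2) ?_ ?_ ?_ (Or.inl ?_) <;> simp [Pz, PB] <;> linarith
lemma nm6B (r s : ℝ) (hr : 0 ≤ r) (hs : 0 ≤ s) : PB s ∉ I (PB r) Pz := by
  rcases le_or_gt r s with h | h
  · refine notMemA 2 1 (5*r+7) ?_ ?_ ?_ (Or.inr (Or.inl ?_)) <;> simp [Pz, PB] <;> linarith
  · refine notMemA r (-(2*r+5/2)) (-(4*r+5)) ?_ ?_ ?_ (Or.inr (Or.inr ?_)) <;>
      simp [Pz, PB] <;> nlinarith

lemma nm7gen (r : ℝ) (hr : 0 ≤ r) {w : ℝ × ℝ} (hw : -2 * w.1 + w.2 ≤ 2) : w ∉ I Px (PC r) := by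
  refine notMemA 2 (-1) (-2) ?_ ?_ ?_ (Or.inr (Or.inl ?_)) <;> simp [Px, PC] <;> linarith
lemma nm7C (r s : ℝ) (hr : 0 ≤ r) (hs : 0 ≤ s) : PC s ∉ I Px (PC r) := by
  rcases le_or_gt r s with h | h
  · refine notMemA (-2) 1 (5*r+7) ?_ ?_ ?_ (Or.inl ?_) <;> simp [Px, PC] <;> linarith
  · refine notMemA (r+2) (2*r+3/2) (-(r+2)) ?_ ?_ ?_ (Or.inr (Or.inr ?_)) <;>
      simp [Px, PC] <;> nlinarith

lemma nm8gen (r : ℝ) (hr : 0 ≤ r) {w : ℝ × ℝ} (hw : -2 * w.1 + w.2 ≤ 2) : w ∉ I (PC r) Pz := by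
  refine notMemA 2 (-1) (-2) ?_ ?_ ?_ (Or.inl ?_) <;> simp [Pz, PC] <;> linarith
lemma nm8C (r s : ℝ) (hr : 0 ≤ r) (hs : 0 ≤ s) : PC s ∉ I (PC r) Pz := by
  rcases le_or_gt r s with h | h
  · refine notMemA (-2) 1 (5*r+7) ?_ ?_ ?_ (Or.inr (Or.inl ?_)) <;> simp [Pz, PC] <;> linarith
  · refine notMemA (-r) (-(2*r+5/2)) (-(4*r+5)) ?_ ?_ ?_ (Or.inr (Or.inr ?_)) <;>
      simp [Pz, PC] <;> nlinarith


inductive XYZ | x | y | z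
deriving DecidableEq

instance : Fintype XYZ where
  elems := {XYZ.x, XYZ.y, XYZ.z}
  complete := by intro a; cases a <;> decide

abbrev V (m : ℕ) := XYZ ⊕ (Fin m ⊕ (Fin m ⊕ Fin (m + 1)))

def adj {m : ℕ} : V m → V m → Bool
  | inl .x, inl .y => true
  | inl .y, inl .x => true
  | inl .y, inl .z => true
  | inl .z, inl .y => true
  | inl .x, inr (inl _) => true
  | inr (inl _), inl .x => true
  | inr (inl _), inl .y => true
  | inl .y, inr (inl _) => true
  | inl .y, inr (inr (inl _)) => true
  | inr (inr (inl _)), inl .y => true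
  | inr (inr (inl _)), inl .z => true
  | inl .z, inr (inr (inl _)) => true
  | inl .x, inr (inr (inr _)) => true
  | inr (inr (inr _)), inl .x => true
  | inr (inr (inr _)), inl .z => true
  | inl .z, inr (inr (inr _)) => true
  | _, _ => false

def G (m : ℕ) : SimpleGraph (V m) where
  Adj u v := adj u v = true
  symm := by
    constructor
    rintro (u | i | j | l) (v | i' | j' | l') h <;> first
      | (cases u <;> cases v <;> simp_all [adj])
      | (cases u <;> simp_all [adj])
      | (cases v <;> simp_all [adj])
      | simp_all [adj]
  loopless := by
    constructor
    rintro (u | i | j | l) h <;> first | (cases u <;> simp_all [adj]) | simp_all [adj]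

noncomputable def pos {m : ℕ} : V m → ℝ × ℝ
  | inl .x => Px
  | inl .y => Py
  | inl .z => Pz
  | inr (inl i) => PA (i.1 : ℝ)
  | inr (inr (inl j)) => PB (j.1 : ℝ)
  | inr (inr (inr l)) => PC (l.1 : ℝ)

lemma pos_inj (m : ℕ) : Function.Injective (pos (m := m)) := by
  intro u v h
  rcases u with (u | i | i | i) <;> rcases v with (v | i' | i' | i') <;>
    (try cases u) <;> (try cases v) <;>
    simp only [pos, Px, Py, Pz, PA, PB, PC, Prod.mk.injEq] at h <;>
    solve
    | rfl
    | (refine absurd h.1 ?_; norm_num)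
    | (refine absurd h.2 ?_; norm_num)
    | (exfalso; have h1 := h.1; have h2 := h.2;
       have a1 : (0:ℝ) ≤ i.1 := Nat.cast_nonneg _;
       have a2 : (0:ℝ) ≤ i'.1 := Nat.cast_nonneg _; nlinarith)
    | (exfalso; have h1 := h.1;
       have a1 : (0:ℝ) ≤ i.1 := Nat.cast_nonneg _; linarith)
    | (exfalso; have h1 := h.1;
       have a1 : (0:ℝ) ≤ i'.1 := Nat.cast_nonneg _; linarith)
    | (exfalso; have h2 := h.2;
       have a1 : (0:ℝ) ≤ i.1 := Nat.cast_nonneg _; linarith)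
    | (exfalso; have h2 := h.2;
       have a1 : (0:ℝ) ≤ i'.1 := Nat.cast_nonneg _; linarith)
    | (have hii : i = i' := by
         apply Fin.ext
         have h1 := h.1; have h2 := h.2
         exact_mod_cast (show (i.1:ℝ) = i'.1 by linarith)
       rw [hii])

inductive ED (m : ℕ)
  | e1 | e2
  | e3 (i : Fin m) | e4 (i : Fin m)
  | e5 (i : Fin m) | e6 (i : Fin m)
  | e7 (i : Fin (m + 1)) | e8 (i : Fin (m + 1))

def srcV {m : ℕ} : ED m → V m
  | .e1 => inl .x
  | .e2 => inl .y
  | .e3 i => inl .x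
  | .e4 i => inr (inl i)
  | .e5 i => inl .y
  | .e6 i => inr (inr (inl i))
  | .e7 i => inl .x
  | .e8 i => inr (inr (inr i))

def tgtV {m : ℕ} : ED m → V m
  | .e1 => inl .y
  | .e2 => inl .z
  | .e3 i => inr (inl i)
  | .e4 i => inl .y
  | .e5 i => inr (inr (inl i))
  | .e6 i => inl .z
  | .e7 i => inr (inr (inr i))
  | .e8 i => inl .z

lemma classify {m : ℕ} {u v : V m} (h : (G m).Adj u v) :
    ∃ ed : ED m, s(u, v) = s(srcV ed, tgtV ed) ∧
      I (pos u) (pos v) = I (pos (srcV ed)) (pos (tgtV ed)) := by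
  rcases u with (u | i | i | i) <;> rcases v with (v | i' | i' | i') <;>
    (try cases u) <;> (try cases v) <;>
    solve
    | (refine absurd h ?_; simp [G, adj])
    | exact ⟨ED.e1, rfl, rfl⟩
    | exact ⟨ED.e1, Sym2.eq_swap, I_comm _ _⟩
    | exact ⟨ED.e2, rfl, rfl⟩
    | exact ⟨ED.e2, Sym2.eq_swap, I_comm _ _⟩
    | exact ⟨ED.e3 i', rfl, rfl⟩
    | exact ⟨ED.e3 i, Sym2.eq_swap, I_comm _ _⟩
    | exact ⟨ED.e4 i, rfl, rfl⟩
    | exact ⟨ED.e4 i', Sym2.eq_swap, I_comm _ _⟩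
    | exact ⟨ED.e5 i', rfl, rfl⟩
    | exact ⟨ED.e5 i, Sym2.eq_swap, I_comm _ _⟩
    | exact ⟨ED.e6 i, rfl, rfl⟩
    | exact ⟨ED.e6 i', Sym2.eq_swap, I_comm _ _⟩
    | exact ⟨ED.e7 i', rfl, rfl⟩
    | exact ⟨ED.e7 i, Sym2.eq_swap, I_comm _ _⟩
    | exact ⟨ED.e8 i, rfl, rfl⟩
    | exact ⟨ED.e8 i', Sym2.eq_swap, I_comm _ _⟩

lemma neR {m : ℕ} {i i' : Fin m} (h : i ≠ i') : ((i.1 : ℝ)) ≠ ((i'.1 : ℝ)) :=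
  fun hc => h (Fin.ext (by exact_mod_cast hc))



set_option maxHeartbeats 4000000 in
lemma EDdisj {m : ℕ} (e f : ED m)
    (hef : s(srcV e, tgtV e) ≠ s(srcV f, tgtV f)) :
    Disjoint (I (pos (srcV e)) (pos (tgtV e))) (I (pos (srcV f)) (pos (tgtV f))) := by
  rcases e with _ | _ | i | i | i | i | i | i <;>
    rcases f with _ | _ | i' | i' | i' | i' | i' | i' <;>
    simp only [srcV, tgtV, pos] at hef ⊢ <;>
    solve
    | exact absurd rfl hef
    | exact D12
    | exact D12.symm
    | exact GA3 _ (Nat.cast_nonneg _) Yx Yy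
    | exact (GA3 _ (Nat.cast_nonneg _) Yx Yy).symm
    | exact GA3 _ (Nat.cast_nonneg _) Yy Yz
    | exact (GA3 _ (Nat.cast_nonneg _) Yy Yz).symm
    | exact GA3 _ (Nat.cast_nonneg _) Yy (YB _ (Nat.cast_nonneg _))
    | exact (GA3 _ (Nat.cast_nonneg _) Yy (YB _ (Nat.cast_nonneg _))).symm
    | exact GA3 _ (Nat.cast_nonneg _) (YB _ (Nat.cast_nonneg _)) Yz
    | exact (GA3 _ (Nat.cast_nonneg _) (YB _ (Nat.cast_nonneg _)) Yz).symm
    | exact GA3 _ (Nat.cast_nonneg _) Yx (YC _ (Nat.cast_nonneg _))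
    | exact (GA3 _ (Nat.cast_nonneg _) Yx (YC _ (Nat.cast_nonneg _))).symm
    | exact GA3 _ (Nat.cast_nonneg _) (YC _ (Nat.cast_nonneg _)) Yz
    | exact (GA3 _ (Nat.cast_nonneg _) (YC _ (Nat.cast_nonneg _)) Yz).symm
    | exact GA4 _ (Nat.cast_nonneg _) Yx Yy
    | exact (GA4 _ (Nat.cast_nonneg _) Yx Yy).symm
    | exact GA4 _ (Nat.cast_nonneg _) Yy Yz
    | exact (GA4 _ (Nat.cast_nonneg _) Yy Yz).symm
    | exact GA4 _ (Nat.cast_nonneg _) Yy (YB _ (Nat.cast_nonneg _))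
    | exact (GA4 _ (Nat.cast_nonneg _) Yy (YB _ (Nat.cast_nonneg _))).symm
    | exact GA4 _ (Nat.cast_nonneg _) (YB _ (Nat.cast_nonneg _)) Yz
    | exact (GA4 _ (Nat.cast_nonneg _) (YB _ (Nat.cast_nonneg _)) Yz).symm
    | exact GA4 _ (Nat.cast_nonneg _) Yx (YC _ (Nat.cast_nonneg _))
    | exact (GA4 _ (Nat.cast_nonneg _) Yx (YC _ (Nat.cast_nonneg _))).symm
    | exact GA4 _ (Nat.cast_nonneg _) (YC _ (Nat.cast_nonneg _)) Yz
    | exact (GA4 _ (Nat.cast_nonneg _) (YC _ (Nat.cast_nonneg _)) Yz).symm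
    | exact GB5 _ (Nat.cast_nonneg _) F3x F3y
    | exact (GB5 _ (Nat.cast_nonneg _) F3x F3y).symm
    | exact GB5 _ (Nat.cast_nonneg _) F3y F3z
    | exact (GB5 _ (Nat.cast_nonneg _) F3y F3z).symm
    | exact GB5 _ (Nat.cast_nonneg _) F3x (F3C _ (Nat.cast_nonneg _))
    | exact (GB5 _ (Nat.cast_nonneg _) F3x (F3C _ (Nat.cast_nonneg _))).symm
    | exact GB5 _ (Nat.cast_nonneg _) (F3C _ (Nat.cast_nonneg _)) F3z
    | exact (GB5 _ (Nat.cast_nonneg _) (F3C _ (Nat.cast_nonneg _)) F3z).symm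
    | exact GB6 _ (Nat.cast_nonneg _) F3x F3y
    | exact (GB6 _ (Nat.cast_nonneg _) F3x F3y).symm
    | exact GB6 _ (Nat.cast_nonneg _) F3y F3z
    | exact (GB6 _ (Nat.cast_nonneg _) F3y F3z).symm
    | exact GB6 _ (Nat.cast_nonneg _) F3x (F3C _ (Nat.cast_nonneg _))
    | exact (GB6 _ (Nat.cast_nonneg _) F3x (F3C _ (Nat.cast_nonneg _))).symm
    | exact GB6 _ (Nat.cast_nonneg _) (F3C _ (Nat.cast_nonneg _)) F3z
    | exact (GB6 _ (Nat.cast_nonneg _) (F3C _ (Nat.cast_nonneg _)) F3z).symm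
    | exact GC7 _ (Nat.cast_nonneg _) F4x F4y
    | exact (GC7 _ (Nat.cast_nonneg _) F4x F4y).symm
    | exact GC7 _ (Nat.cast_nonneg _) F4y F4z
    | exact (GC7 _ (Nat.cast_nonneg _) F4y F4z).symm
    | exact GC7 _ (Nat.cast_nonneg _) F4y (F4B _ (Nat.cast_nonneg _))
    | exact (GC7 _ (Nat.cast_nonneg _) F4y (F4B _ (Nat.cast_nonneg _))).symm
    | exact GC7 _ (Nat.cast_nonneg _) (F4B _ (Nat.cast_nonneg _)) F4z
    | exact (GC7 _ (Nat.cast_nonneg _) (F4B _ (Nat.cast_nonneg _)) F4z).symm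
    | exact GC8 _ (Nat.cast_nonneg _) F4x F4y
    | exact (GC8 _ (Nat.cast_nonneg _) F4x F4y).symm
    | exact GC8 _ (Nat.cast_nonneg _) F4y F4z
    | exact (GC8 _ (Nat.cast_nonneg _) F4y F4z).symm
    | exact GC8 _ (Nat.cast_nonneg _) F4y (F4B _ (Nat.cast_nonneg _))
    | exact (GC8 _ (Nat.cast_nonneg _) F4y (F4B _ (Nat.cast_nonneg _))).symm
    | exact GC8 _ (Nat.cast_nonneg _) (F4B _ (Nat.cast_nonneg _)) F4z
    | exact (GC8 _ (Nat.cast_nonneg _) (F4B _ (Nat.cast_nonneg _)) F4z).symm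
    | exact D34 _ _
    | exact (D34 _ _).symm
    | exact D56 _ _ (Nat.cast_nonneg _) (Nat.cast_nonneg _)
    | exact (D56 _ _ (Nat.cast_nonneg _) (Nat.cast_nonneg _)).symm
    | exact D78 _ _ (Nat.cast_nonneg _) (Nat.cast_nonneg _)
    | exact (D78 _ _ (Nat.cast_nonneg _) (Nat.cast_nonneg _)).symm
    | exact D33 _ _ (neR fun hii => hef (by rw [hii]))
    | exact D44 _ _ (neR fun hii => hef (by rw [hii]))
    | exact D55 _ _ (neR fun hii => hef (by rw [hii]))
    | exact D66 _ _ (neR fun hii => hef (by rw [hii]))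
    | exact D77 _ _ (neR fun hii => hef (by rw [hii]))
    | exact D88 _ _ (neR fun hii => hef (by rw [hii]))

set_option maxHeartbeats 4000000 in
lemma NM {m : ℕ} (e : ED m) (w : V m) :
    pos w ∉ I (pos (srcV e)) (pos (tgtV e)) := by
  rcases e with _ | _ | i | i | i | i | i | i <;>
    rcases w with (w | i' | i' | i') <;> (try cases w) <;>
    simp only [srcV, tgtV, pos] <;>
    solve
    | exact nm1x
    | exact nm1y
    | exact nm1z
    | exact nm1A _ (Nat.cast_nonneg _)
    | exact nm1B _ (Nat.cast_nonneg _)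
    | exact nm1C _ (Nat.cast_nonneg _)
    | exact nm2x
    | exact nm2y
    | exact nm2z
    | exact nm2A _ (Nat.cast_nonneg _)
    | exact nm2B _ (Nat.cast_nonneg _)
    | exact nm2C _ (Nat.cast_nonneg _)
    | exact nm3x _ (Nat.cast_nonneg _)
    | exact nm3gen _ (Nat.cast_nonneg _) Yy
    | exact nm3gen _ (Nat.cast_nonneg _) Yz
    | exact nm3gen _ (Nat.cast_nonneg _) (YB _ (Nat.cast_nonneg _))
    | exact nm3gen _ (Nat.cast_nonneg _) (YC _ (Nat.cast_nonneg _))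
    | exact nm3A _ _
    | exact nm4y _ (Nat.cast_nonneg _)
    | exact nm4gen _ (Nat.cast_nonneg _) Yx
    | exact nm4gen _ (Nat.cast_nonneg _) Yz
    | exact nm4gen _ (Nat.cast_nonneg _) (YB _ (Nat.cast_nonneg _))
    | exact nm4gen _ (Nat.cast_nonneg _) (YC _ (Nat.cast_nonneg _))
    | exact nm4A _ _
    | exact nm5gen _ (Nat.cast_nonneg _) F3x
    | exact nm5gen _ (Nat.cast_nonneg _) F3y
    | exact nm5gen _ (Nat.cast_nonneg _) F3z
    | exact nm5gen _ (Nat.cast_nonneg _) (F3A _ (Nat.cast_nonneg _))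
    | exact nm5gen _ (Nat.cast_nonneg _) (F3C _ (Nat.cast_nonneg _))
    | exact nm5B _ _ (Nat.cast_nonneg _) (Nat.cast_nonneg _)
    | exact nm6gen _ (Nat.cast_nonneg _) F3x
    | exact nm6gen _ (Nat.cast_nonneg _) F3y
    | exact nm6gen _ (Nat.cast_nonneg _) F3z
    | exact nm6gen _ (Nat.cast_nonneg _) (F3A _ (Nat.cast_nonneg _))
    | exact nm6gen _ (Nat.cast_nonneg _) (F3C _ (Nat.cast_nonneg _))
    | exact nm6B _ _ (Nat.cast_nonneg _) (Nat.cast_nonneg _)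
    | exact nm7gen _ (Nat.cast_nonneg _) F4x
    | exact nm7gen _ (Nat.cast_nonneg _) F4y
    | exact nm7gen _ (Nat.cast_nonneg _) F4z
    | exact nm7gen _ (Nat.cast_nonneg _) (F4A _ (Nat.cast_nonneg _))
    | exact nm7gen _ (Nat.cast_nonneg _) (F4B _ (Nat.cast_nonneg _))
    | exact nm7C _ _ (Nat.cast_nonneg _) (Nat.cast_nonneg _)
    | exact nm8gen _ (Nat.cast_nonneg _) F4x
    | exact nm8gen _ (Nat.cast_nonneg _) F4y
    | exact nm8gen _ (Nat.cast_nonneg _) F4z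
    | exact nm8gen _ (Nat.cast_nonneg _) (F4A _ (Nat.cast_nonneg _))
    | exact nm8gen _ (Nat.cast_nonneg _) (F4B _ (Nat.cast_nonneg _))
    | exact nm8C _ _ (Nat.cast_nonneg _) (Nat.cast_nonneg _)

lemma isPlanar_G (m : ℕ) : IsPlanar (G m) := by
  refine ⟨pos, fun u v => seg (pos u) (pos v), pos_inj m, ?_, ?_⟩
  · intro u v huv
    refine ⟨seg_cont _ _, seg_zero _ _, seg_one _ _,
      seg_injOn (fun hpq => (G m).ne_of_adj huv (pos_inj m hpq)), ?_⟩
    intro w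
    obtain ⟨ed, _, hI⟩ := classify huv
    show pos w ∉ I (pos u) (pos v)
    rw [hI]
    exact NM ed w
  · intro u v x y huv hxy hne
    obtain ⟨ed, hs, hI⟩ := classify huv
    obtain ⟨fd, hs', hI'⟩ := classify hxy
    show Disjoint (I (pos u) (pos v)) (I (pos x) (pos y))
    rw [hI, hI']
    refine EDdisj ed fd ?_
    rw [← hs, ← hs']
    exact hne



lemma square_G_top (m : ℕ) : (G m).square = ⊤ := by
  ext u v
  simp only [SimpleGraph.square, SimpleGraph.top_adj]
  constructor
  · rintro ⟨h, _⟩; exact h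
  · intro h
    refine ⟨h, ?_⟩
    rcases u with (u | i | j | l) <;> rcases v with (v | i' | j' | l') <;>
      (try cases u) <;> (try cases v) <;>
      solve
      | exact Or.inl rfl
      | exact Or.inr ⟨inl .x, rfl, rfl⟩
      | exact Or.inr ⟨inl .y, rfl, rfl⟩
      | exact Or.inr ⟨inl .z, rfl, rfl⟩

lemma card_V (m : ℕ) : Fintype.card (V m) = 3 * m + 4 := by
  simp [Fintype.card_sum, show Fintype.card XYZ = 3 from rfl]; ring

lemma ncard_split {m : ℕ} (p : V m → Prop) [DecidablePred p] :
    Nat.card {u // p u} =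
      Fintype.card {v : XYZ // p (inl v)} +
      (Fintype.card {i : Fin m // p (inr (inl i))} +
      (Fintype.card {j : Fin m // p (inr (inr (inl j)))} +
       Fintype.card {l : Fin (m + 1) // p (inr (inr (inr l)))})) := by
  rw [Nat.card_eq_fintype_card,
    Fintype.card_congr (Equiv.subtypeSum.trans ((Equiv.refl _).sumCongr
      (Equiv.subtypeSum.trans ((Equiv.refl _).sumCongr Equiv.subtypeSum))))]
  simp [Fintype.card_sum]

lemma card_true {n : ℕ} {p : Fin n → Prop} [DecidablePred p] (h : ∀ i, p i) :
    Fintype.card {i // p i} = n := by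
  rw [Fintype.card_congr (Equiv.subtypeUnivEquiv h)]; exact Fintype.card_fin n

lemma card_false {n : ℕ} {p : Fin n → Prop} [DecidablePred p] (h : ∀ i, ¬ p i) :
    Fintype.card {i // p i} = 0 :=
  Fintype.card_eq_zero_iff.mpr ⟨fun ⟨i, hi⟩ => h i hi⟩

lemma deg_x (m : ℕ) : Nat.card {u : V m // adj (inl XYZ.x) u = true} = 2 * m + 2 := by
  rw [ncard_split,
    card_true (p := fun i : Fin m => adj (m := m) (inl XYZ.x) (inr (inl i)) = true) (fun i => rfl),
    card_false (fun j h => by simp [adj] at h),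
    card_true (p := fun l : Fin (m+1) => adj (m := m) (inl XYZ.x) (inr (inr (inr l))) = true) (fun l => rfl),
    show Fintype.card {v : XYZ // adj (m := m) (inl XYZ.x) (inl v) = true} = 1 from rfl]
  omega

lemma deg_y (m : ℕ) : Nat.card {u : V m // adj (inl XYZ.y) u = true} = 2 * m + 2 := by
  rw [ncard_split,
    card_true (p := fun i : Fin m => adj (m := m) (inl XYZ.y) (inr (inl i)) = true) (fun i => rfl),
    card_true (p := fun j : Fin m => adj (m := m) (inl XYZ.y) (inr (inr (inl j))) = true) (fun j => rfl),
    card_false (fun l h => by simp [adj] at h),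
    show Fintype.card {v : XYZ // adj (m := m) (inl XYZ.y) (inl v) = true} = 2 from rfl]
  omega

lemma deg_z (m : ℕ) : Nat.card {u : V m // adj (inl XYZ.z) u = true} = 2 * m + 2 := by
  rw [ncard_split, card_false (fun i h => by simp [adj] at h),
    card_true (p := fun j : Fin m => adj (m := m) (inl XYZ.z) (inr (inr (inl j))) = true) (fun j => rfl),
    card_true (p := fun l : Fin (m+1) => adj (m := m) (inl XYZ.z) (inr (inr (inr l))) = true) (fun l => rfl),
    show Fintype.card {v : XYZ // adj (m := m) (inl XYZ.z) (inl v) = true} = 1 from rfl]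
  omega

lemma deg_a (m : ℕ) (i : Fin m) : Nat.card {u : V m // adj (inr (inl i)) u = true} = 2 := by
  rw [ncard_split, card_false (fun i' h => by simp [adj] at h),
    card_false (fun j h => by simp [adj] at h), card_false (fun l h => by simp [adj] at h),
    show Fintype.card {v : XYZ // adj (m := m) (inr (inl i)) (inl v) = true} = 2 from rfl]

lemma deg_b (m : ℕ) (j : Fin m) :
    Nat.card {u : V m // adj (inr (inr (inl j))) u = true} = 2 := by
  rw [ncard_split, card_false (fun i' h => by simp [adj] at h),
    card_false (fun j' h => by simp [adj] at h), card_false (fun l h => by simp [adj] at h),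
    show Fintype.card {v : XYZ // adj (m := m) (inr (inr (inl j))) (inl v) = true} = 2 from rfl]

lemma deg_c (m : ℕ) (l : Fin (m + 1)) :
    Nat.card {u : V m // adj (inr (inr (inr l))) u = true} = 2 := by
  rw [ncard_split, card_false (fun i' h => by simp [adj] at h),
    card_false (fun j' h => by simp [adj] at h), card_false (fun l' h => by simp [adj] at h),
    show Fintype.card {v : XYZ // adj (m := m) (inr (inr (inr l))) (inl v) = true} = 2 from rfl]


end Weg


lemma isPlanar_comap {α β : Type*} (f : α → β) (hf : Function.Injective f)
    {G : SimpleGraph β} (h : IsPlanar G) : IsPlanar (G.comap f) := by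
  obtain ⟨pos, arc, hinj, h2, h3⟩ := h
  refine ⟨pos ∘ f, fun u v => arc (f u) (f v), hinj.comp hf, ?_, ?_⟩
  · intro u v huv
    obtain ⟨hc, h0, h1, hio, hnm⟩ := h2 (f u) (f v) huv
    exact ⟨hc, h0, h1, hio, fun w => hnm (f w)⟩
  · intro u v x y huv hxy hne
    refine h3 _ _ _ _ huv hxy ?_
    intro hc
    apply hne
    rw [Sym2.eq_iff] at hc ⊢
    rcases hc with ⟨ha, hb⟩ | ⟨ha, hb⟩
    · exact Or.inl ⟨hf ha, hf hb⟩
    · exact Or.inr ⟨hf ha, hf hb⟩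

/-- For every even `Δ ≥ 2`, there exists a planar graph `G` with maximum degree `Δ`
such that `χ₂(G) ≥ 3Δ/2 + 1`. -/
theorem stmt5 (Δ : ℕ) (heven : Even Δ) (hΔ : 2 ≤ Δ) :
    ∃ (n : ℕ) (G : SimpleGraph (Fin n)), IsPlanar G ∧ maxDegIs G Δ ∧
      ((3 * Δ / 2 + 1 : ℕ) : ℕ∞) ≤ chi2 G := by
  classical
  open Weg Sum in
  obtain ⟨k, hk⟩ := heven
  set m : ℕ := k - 1 with hm
  have hΔ' : Δ = 2 * m + 2 := by omega
  set e := Fintype.equivFin (Weg.V m) with he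
  refine ⟨Fintype.card (Weg.V m), SimpleGraph.comap (⇑e.symm) (Weg.G m), ?_, ?_, ?_⟩
  · exact isPlanar_comap _ e.symm.injective (Weg.isPlanar_G m)
  · have hd : ∀ v, degN (SimpleGraph.comap (⇑e.symm) (Weg.G m)) v
        = degN (Weg.G m) (e.symm v) := by
      intro v
      exact Nat.card_congr (Equiv.subtypeEquiv e.symm (fun u => Iff.rfl))
    constructor
    · intro v
      rw [hd, hΔ']
      rcases hw : e.symm v with (w | i | i | i) <;> (try cases w) <;>
        solve
        | exact le_of_eq (Weg.deg_x m)
        | exact le_of_eq (Weg.deg_y m)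
        | exact le_of_eq (Weg.deg_z m)
        | (refine le_trans (le_of_eq (Weg.deg_a m i)) (by omega))
        | (refine le_trans (le_of_eq (Weg.deg_b m i)) (by omega))
        | (refine le_trans (le_of_eq (Weg.deg_c m i)) (by omega))
    · refine ⟨e (inl XYZ.x), ?_⟩
      rw [hd, Equiv.symm_apply_apply, hΔ']
      exact Weg.deg_x m
  · have hsq : (SimpleGraph.comap (⇑e.symm) (Weg.G m)).square = ⊤ := by
      ext u v
      rw [SimpleGraph.top_adj]
      constructor
      · exact fun h => h.1
      · intro h
        refine ⟨h, ?_⟩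
        have h2 : e.symm u ≠ e.symm v := fun hc => h (e.symm.injective hc)
        have hAdj : (Weg.G m).square.Adj (e.symm u) (e.symm v) := by
          rw [Weg.square_G_top]; exact h2
        rcases hAdj.2 with hA | ⟨w, hw1, hw2⟩
        · exact Or.inl hA
        · refine Or.inr ⟨e w, ?_, ?_⟩ <;>
            simp only [SimpleGraph.comap_adj, Equiv.symm_apply_apply] <;>
            assumption
    have hchi : chi2 (SimpleGraph.comap (⇑e.symm) (Weg.G m))
        = (Fintype.card (Fin (Fintype.card (Weg.V m))) : ℕ∞) := by
      unfold chi2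
      rw [hsq, SimpleGraph.chromaticNumber_top]
    rw [hchi]
    rw [Fintype.card_fin, Weg.card_V]
    have harith : 3 * Δ / 2 + 1 = 3 * m + 4 := by omega
    rw [harith]
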